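/- Let (X, τ, 𝔐, μ) be a topological measure space with a countable cover of X by open sets of finite measure. Then the following are equivalent: (i) every open set U ⊆ X can be written as U = F ∪ Z with F an F_σ set and Z null; (ii) for every Borel set B and every ε > 0 there exists an open U ⊇ B with μ(U \ B) < ε; (iii) for every Borel set B and every ε > 0 there exists a closed C ⊆ B with μ(B \ C) < ε. -/

import Mathlib

open MeasureTheory Set Topology Filter
open scoped ENNReal NNReal

private lemma closed_meas' {X : Type*} [TopologicalSpace X] [MeasurableSpace X]
    (hBorel : ∀ s : Set X, IsOpen s → MeasurableSet s) {C : Set X} (hC : IsClosed C) :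
    MeasurableSet C := by
  have := (hBorel _ hC.isOpen_compl).compl
  rwa [compl_compl] at this

/-- From a countable family of closed sets almost covering `B`, extract a single closed set. -/
private lemma partial_closed' {X : Type*} [TopologicalSpace X] [MeasurableSpace X]
    (hBorel : ∀ s : Set X, IsOpen s → MeasurableSet s)
    (ν : Measure X) [IsFiniteMeasure ν]
    {B : Set X} (hB : MeasurableSet B) {C : ℕ → Set X} (hC : ∀ n, IsClosed (C n))
    (hsub : ∀ n, C n ⊆ B) {ε : ℝ≥0∞} (hε : ν (B \ ⋃ n, C n) < ε) :
    ∃ D : Set X, IsClosed D ∧ D ⊆ B ∧ ν (B \ D) < ε := by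
  have hacc_closed : ∀ k, IsClosed (accumulate C k) := fun k =>
    (Set.finite_Iic k).isClosed_biUnion (fun i _ => hC i)
  have hmono : Antitone fun k => B \ accumulate C k := fun i j hij =>
    diff_subset_diff_right (monotone_accumulate hij)
  have hms : ∀ k, NullMeasurableSet (B \ accumulate C k) ν := fun k =>
    (hB.diff (closed_meas' hBorel (hacc_closed k))).nullMeasurableSet
  have hinter : (⋂ k, B \ accumulate C k) = B \ ⋃ n, C n := by
    rw [← Set.diff_iUnion, Set.iUnion_accumulate]
  have htend := tendsto_measure_iInter_atTop (μ := ν) hms hmono ⟨0, measure_ne_top ν _⟩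
  rw [hinter] at htend
  have hev := htend.eventually_lt_const hε
  obtain ⟨k, hk⟩ := hev.exists
  exact ⟨accumulate C k, hacc_closed k, fun x hx => by
    obtain ⟨i, _, hi⟩ := Set.mem_accumulate.1 hx
    exact hsub i hi, hk⟩

/-- Regularity for a finite measure, given inner closed approximation of open sets. -/
private lemma good_finite' {X : Type*} [TopologicalSpace X] [MeasurableSpace X]
    (hBorel : ∀ s : Set X, IsOpen s → MeasurableSet s)
    (ν : Measure X) [IsFiniteMeasure ν]
    (h1 : ∀ U : Set X, IsOpen U → ∃ C : ℕ → Set X,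
      (∀ n, IsClosed (C n)) ∧ (∀ n, C n ⊆ U) ∧ ν (U \ ⋃ n, C n) = 0) :
    ∀ B : Set X, MeasurableSet[borel X] B → ∀ ε : ℝ≥0∞, 0 < ε →
      (∃ U, IsOpen U ∧ B ⊆ U ∧ ν (U \ B) < ε) ∧
      (∃ C, IsClosed C ∧ C ⊆ B ∧ ν (B \ C) < ε) := by
  have hle : borel X ≤ ‹MeasurableSpace X› := MeasurableSpace.generateFrom_le hBorel
  have main : ∀ B : Set X, MeasurableSet[borel X] B →
      (∀ ε : ℝ≥0∞, 0 < ε →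
        (∃ U, IsOpen U ∧ B ⊆ U ∧ ν (U \ B) < ε) ∧
        (∃ C, IsClosed C ∧ C ⊆ B ∧ ν (B \ C) < ε)) := by
    refine MeasurableSpace.induction_on_inter (m := borel X)
      (C := fun B _ => ∀ ε : ℝ≥0∞, 0 < ε →
        (∃ U, IsOpen U ∧ B ⊆ U ∧ ν (U \ B) < ε) ∧
        (∃ C, IsClosed C ∧ C ⊆ B ∧ ν (B \ C) < ε))
      rfl (fun s hs t ht _ => hs.inter ht) ?_ ?_ ?_ ?_
    · intro ε hε
      exact ⟨⟨∅, isOpen_empty, Subset.rfl, by simpa using hε⟩,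
        ⟨∅, isClosed_empty, Subset.rfl, by simpa using hε⟩⟩
    · intro t ht ε hε
      refine ⟨⟨t, ht, Subset.rfl, by simpa using hε⟩, ?_⟩
      obtain ⟨C, hC, hCsub, hC0⟩ := h1 t ht
      exact partial_closed' hBorel ν (hBorel t ht) hC hCsub (hC0 ▸ hε)
    · intro t htm iht ε hε
      obtain ⟨⟨U, hUo, htU, hUm⟩, ⟨C, hCc, hCt, hCm⟩⟩ := iht ε hε
      refine ⟨⟨Cᶜ, hCc.isOpen_compl, compl_subset_compl.2 hCt, ?_⟩,
        ⟨Uᶜ, hUo.isClosed_compl, compl_subset_compl.2 htU, ?_⟩⟩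
      · have : Cᶜ \ tᶜ = t \ C := by
          ext x; simp [and_comm]
        rwa [this]
      · have : tᶜ \ Uᶜ = U \ t := by
          ext x; simp [and_comm]
        rwa [this]
    · intro f hdisj hfm ihf ε hε
      obtain ⟨δ, hδpos, hδsum⟩ := ENNReal.exists_pos_sum_of_countable' hε.ne' ℕ
      have hBm : MeasurableSet (⋃ i, f i) := MeasurableSet.iUnion fun i => hle _ (hfm i)
      choose U hUo hfU hUm using fun i => (ihf i (δ i) (hδpos i)).1
      choose C hCc hCf hCm using fun i => (ihf i (δ i) (hδpos i)).2
      constructor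
      · refine ⟨⋃ i, U i, isOpen_iUnion hUo, iUnion_mono hfU, ?_⟩
        have h1 : (⋃ i, U i) \ ⋃ i, f i ⊆ ⋃ i, (U i \ f i) := by
          intro x hx
          obtain ⟨i, hi⟩ := mem_iUnion.1 hx.1
          exact mem_iUnion.2 ⟨i, hi, fun h => hx.2 (mem_iUnion.2 ⟨i, h⟩)⟩
        calc ν ((⋃ i, U i) \ ⋃ i, f i) ≤ ν (⋃ i, (U i \ f i)) := measure_mono h1
          _ ≤ ∑' i, ν (U i \ f i) := measure_iUnion_le _
          _ ≤ ∑' i, δ i := ENNReal.tsum_le_tsum fun i => (hUm i).le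
          _ < ε := hδsum
      · have hsub : ∀ i, C i ⊆ ⋃ j, f j := fun i x hx => mem_iUnion.2 ⟨i, hCf i hx⟩
        refine partial_closed' hBorel ν hBm hCc hsub ?_
        have h1 : (⋃ i, f i) \ ⋃ i, C i ⊆ ⋃ i, (f i \ C i) := by
          intro x hx
          obtain ⟨i, hi⟩ := mem_iUnion.1 hx.1
          exact mem_iUnion.2 ⟨i, hi, fun h => hx.2 (mem_iUnion.2 ⟨i, h⟩)⟩
        calc ν ((⋃ i, f i) \ ⋃ i, C i) ≤ ν (⋃ i, (f i \ C i)) := measure_mono h1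
          _ ≤ ∑' i, ν (f i \ C i) := measure_iUnion_le _
          _ ≤ ∑' i, δ i := ENNReal.tsum_le_tsum fun i => (hCm i).le
          _ < ε := hδsum
  exact fun B hB ε hε => main B hB ε hε

theorem stmt2 {X : Type*} [TopologicalSpace X] [MeasurableSpace X]
    (hBorel : ∀ s : Set X, IsOpen s → MeasurableSet s)
    (μ : Measure X)
    (hcover : ∃ O : ℕ → Set X, (∀ n, IsOpen (O n)) ∧ (⋃ n, O n) = Set.univ ∧ ∀ n, μ (O n) < ⊤) :
    List.TFAE [
      (∀ U : Set X, IsOpen U →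
        ∃ (F Z : Set X) (C : ℕ → Set X),
          (∀ n, IsClosed (C n)) ∧ F = ⋃ n, C n ∧ μ Z = 0 ∧ U = F ∪ Z),
      (∀ B : Set X, MeasurableSet[borel X] B → ∀ ε : ℝ≥0∞, 0 < ε →
        ∃ U : Set X, IsOpen U ∧ B ⊆ U ∧ μ (U \ B) < ε),
      (∀ B : Set X, MeasurableSet[borel X] B → ∀ ε : ℝ≥0∞, 0 < ε →
        ∃ C : Set X, IsClosed C ∧ C ⊆ B ∧ μ (B \ C) < ε)] := by
  obtain ⟨O, hOo, hOu, hOf⟩ := hcover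
  have hle : borel X ≤ ‹MeasurableSpace X› := MeasurableSpace.generateFrom_le hBorel
  tfae_have 1 → 2
  | h1 => by
    intro B hB ε hε
    obtain ⟨δ, hδpos, hδsum⟩ := ENNReal.exists_pos_sum_of_countable' hε.ne' ℕ
    have key : ∀ n, ∃ V : Set X, IsOpen V ∧ B ∩ O n ⊆ V ∧ μ (V \ B) < δ n := by
      intro n
      haveI : IsFiniteMeasure (μ.restrict (O n)) :=
        ⟨by rw [Measure.restrict_apply_univ]; exact hOf n⟩
      have h1' : ∀ U : Set X, IsOpen U → ∃ C : ℕ → Set X,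
          (∀ k, IsClosed (C k)) ∧ (∀ k, C k ⊆ U) ∧
          (μ.restrict (O n)) (U \ ⋃ k, C k) = 0 := by
        intro U hU
        obtain ⟨F, Z, C, hCc, hF, hZ, hUFZ⟩ := h1 U hU
        refine ⟨C, hCc, fun k x hx => hUFZ ▸ Or.inl (hF ▸ mem_iUnion.2 ⟨k, hx⟩), ?_⟩
        have hsub : U \ ⋃ k, C k ⊆ Z := by
          intro x hx
          rcases (hUFZ ▸ hx.1 : x ∈ F ∪ Z) with hF' | hZ'
          · exact absurd (hF ▸ hF') hx.2
          · exact hZ'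
        have : (μ.restrict (O n)) (U \ ⋃ k, C k) ≤ μ Z :=
          le_trans (measure_mono hsub) (Measure.restrict_apply_le _ _)
        exact le_antisymm (hZ ▸ this) zero_le
      obtain ⟨U, hUo, hBU, hUm⟩ :=
        (good_finite' hBorel (μ.restrict (O n)) h1' B hB (δ n) (hδpos n)).1
      refine ⟨U ∩ O n, hUo.inter (hOo n), fun x hx => ⟨hBU hx.1, hx.2⟩, ?_⟩
      have heq : (U ∩ O n) \ B = (U \ B) ∩ O n := by
        ext x; constructor
        · rintro ⟨⟨h1, h2⟩, h3⟩; exact ⟨⟨h1, h3⟩, h2⟩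
        · rintro ⟨⟨h1, h3⟩, h2⟩; exact ⟨⟨h1, h2⟩, h3⟩
      rw [heq, ← Measure.restrict_apply ((hBorel U hUo).diff (hle _ hB))]
      exact hUm
    choose V hVo hVs hVm using key
    refine ⟨⋃ n, V n, isOpen_iUnion hVo, ?_, ?_⟩
    · intro x hx
      have : x ∈ ⋃ n, O n := hOu ▸ mem_univ x
      obtain ⟨n, hn⟩ := mem_iUnion.1 this
      exact mem_iUnion.2 ⟨n, hVs n ⟨hx, hn⟩⟩
    · calc μ ((⋃ n, V n) \ B) = μ (⋃ n, (V n \ B)) := by rw [iUnion_diff]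
        _ ≤ ∑' n, μ (V n \ B) := measure_iUnion_le _
        _ ≤ ∑' n, δ n := ENNReal.tsum_le_tsum fun n => (hVm n).le
        _ < ε := hδsum
  tfae_have 2 → 3
  | h2 => by
    intro B hB ε hε
    obtain ⟨U, hUo, hBU, hUm⟩ := h2 Bᶜ hB.compl ε hε
    refine ⟨Uᶜ, hUo.isClosed_compl, compl_subset_comm.1 hBU, ?_⟩
    have : B \ Uᶜ = U \ Bᶜ := by ext x; simp [and_comm]
    rwa [this]
  tfae_have 3 → 1
  | h3 => by
    intro U hU
    have hUb : MeasurableSet[borel X] U := MeasurableSpace.measurableSet_generateFrom hU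
    have key : ∀ k : ℕ, ∃ C : Set X, IsClosed C ∧ C ⊆ U ∧ μ (U \ C) < ((k : ℝ≥0∞))⁻¹ :=
      fun k => h3 U hUb _ (ENNReal.inv_pos.2 (ENNReal.natCast_ne_top k))
    choose C hCc hCU hCm using key
    refine ⟨⋃ k, C k, U \ ⋃ k, C k, C, hCc, rfl, ?_, ?_⟩
    · by_contra h
      obtain ⟨n, hn⟩ := ENNReal.exists_inv_nat_lt h
      exact absurd (measure_mono (diff_subset_diff_right (subset_iUnion C n)) :
        μ (U \ ⋃ k, C k) ≤ μ (U \ C n)) (not_le.2 (lt_trans (hCm n) hn)).elim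
    · rw [union_diff_cancel (iUnion_subset hCU)]
  tfae_finish
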